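/- For the Landweber bias function r_k(λ) = (1-Δt·λ)^k with Δt > 0, 0 < λ ≤ 1/Δt, and any d > 0, the bound (1-Δt·λ)^k · λ^d ≤ (1/Δt)^d · (d/(d+k))^d holds for every positive integer k. -/
import Mathlib

lemma landweber_key (x d : ℝ) (k : ℕ) (hx0 : 0 ≤ x) (hx1 : x ≤ 1) (hd : 0 < d)
    (hk : 1 ≤ k) : (1 - x) ^ (k:ℝ) * x ^ d ≤ (d / (d + (k:ℝ))) ^ d := by
  have hK : (0:ℝ) < (k:ℝ) := by exact_mod_cast hk
  set K := (k:ℝ) with hKdef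
  have hs : 0 < d + K := by linarith
  have h1x : 0 ≤ 1 - x := by linarith
  have hp1 : 0 ≤ (1 - x) * ((d + K) / K) := mul_nonneg h1x (by positivity)
  have hp2 : 0 ≤ x * ((d + K) / d) := mul_nonneg hx0 (by positivity)
  have hw : K / (d + K) + d / (d + K) = 1 := by field_simp; ring
  have hgm := Real.geom_mean_le_arith_mean2_weighted
    (by positivity) (by positivity) hp1 hp2 hw
  have hrhs : K / (d + K) * ((1 - x) * ((d + K) / K)) +
      d / (d + K) * (x * ((d + K) / d)) = 1 := by
    field_simp; ring
  rw [hrhs] at hgm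
  have h2 : (((1 - x) * ((d + K) / K)) ^ (K / (d + K)) *
      ((x * ((d + K) / d)) ^ (d / (d + K)))) ^ (d + K) ≤ 1 :=
    Real.rpow_le_one (by positivity) hgm hs.le
  rw [Real.mul_rpow (by positivity) (by positivity), ← Real.rpow_mul hp1,
      ← Real.rpow_mul hp2, div_mul_cancel₀ _ hs.ne', div_mul_cancel₀ _ hs.ne',
      Real.mul_rpow h1x (by positivity), Real.mul_rpow hx0 (by positivity)] at h2
  have hB1 : (0:ℝ) < ((d + K) / K) ^ K := Real.rpow_pos_of_pos (by positivity) _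
  have hB2 : (0:ℝ) < ((d + K) / d) ^ d := Real.rpow_pos_of_pos (by positivity) _
  have h3 : (1 - x) ^ K * x ^ d ≤ (((d + K) / K) ^ K)⁻¹ * (((d + K) / d) ^ d)⁻¹ := by
    rw [← mul_inv, ← one_div, le_div_iff₀ (by positivity)]
    have heq : (1 - x) ^ K * x ^ d * (((d + K) / K) ^ K * ((d + K) / d) ^ d)
        = (1 - x) ^ K * ((d + K) / K) ^ K * (x ^ d * ((d + K) / d) ^ d) := by ring
    rw [heq]; exact h2
  have hinv1 : (((d + K) / K) ^ K)⁻¹ = (K / (d + K)) ^ K := by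
    rw [← Real.inv_rpow (by positivity), inv_div]
  have hinv2 : (((d + K) / d) ^ d)⁻¹ = (d / (d + K)) ^ d := by
    rw [← Real.inv_rpow (by positivity), inv_div]
  rw [hinv1, hinv2] at h3
  have hle1 : (K / (d + K)) ^ K ≤ 1 :=
    Real.rpow_le_one (by positivity) (by rw [div_le_one hs]; linarith) hK.le
  calc (1 - x) ^ K * x ^ d ≤ (K / (d + K)) ^ K * (d / (d + K)) ^ d := h3
    _ ≤ 1 * (d / (d + K)) ^ d := by
        have := Real.rpow_nonneg (le_of_lt (div_pos hd hs)) d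
        nlinarith
    _ = (d / (d + K)) ^ d := one_mul _

/-- Landweber qualification bound: (1-Δt·λ)^k·λ^d ≤ (1/Δt)^d·(d/(d+k))^d. -/
theorem landweber_qualification (Δt lam d : ℝ) (k : ℕ)
    (hΔt : 0 < Δt) (hlam : 0 < lam) (hlam' : lam ≤ 1 / Δt) (hd : 0 < d) (hk : 1 ≤ k) :
    (1 - Δt * lam) ^ k * lam ^ d ≤ (1 / Δt) ^ d * (d / (d + k)) ^ d := by
  have hx0 : 0 ≤ Δt * lam := by positivity
  have hx1 : Δt * lam ≤ 1 := by
    rw [le_div_iff₀ hΔt] at hlam'; linarith [hlam']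
  have hkey := landweber_key (Δt * lam) d k hx0 hx1 hd hk
  have hlameq : lam = (Δt * lam) * (1 / Δt) := by field_simp
  have hpow : lam ^ d = (Δt * lam) ^ d * (1 / Δt) ^ d := by
    rw [hlameq, Real.mul_rpow hx0 (by positivity)]
    congr 1; rw [← hlameq]
  have hnp : (1 - Δt * lam) ^ k = (1 - Δt * lam) ^ ((k:ℕ):ℝ) :=
    (Real.rpow_natCast _ k).symm
  rw [hpow, hnp]
  have hpos : (0:ℝ) < (1 / Δt) ^ d := Real.rpow_pos_of_pos (by positivity) _
  calc (1 - Δt * lam) ^ ((k:ℕ):ℝ) * ((Δt * lam) ^ d * (1 / Δt) ^ d)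
      = ((1 - Δt * lam) ^ ((k:ℕ):ℝ) * (Δt * lam) ^ d) * (1 / Δt) ^ d := by ring
    _ ≤ (d / (d + (k:ℝ))) ^ d * (1 / Δt) ^ d := by
        apply mul_le_mul_of_nonneg_right hkey hpos.le
    _ = (1 / Δt) ^ d * (d / (d + k)) ^ d := by ring
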